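/- Let m ≥ 2 and let T be a metrizable compactum with dim T ≤ m that is not embeddable in ℝ^{2m}. Let X = 𝕀^m ⊕ T be the disjoint topological sum, fix a point x₀ ∈ 𝕀^m, and define f : X → 𝕀^m by f(x) = x for x ∈ 𝕀^m and f(x) = x₀ for x ∈ T. Then there is no continuous map g : X → ℝ^{m+2} satisfying dim B_n(f×g) ≤ n·dim X − (n−1)·(m + 2 + dim 𝕀^m) for every n ≥ 1; in particular, any such g would embed T into ℝ^{m+2}, which is impossible since m + 2 ≤ 2m. -/

import Mathlib

open Set Topology Metric BoundedContinuousFunction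

noncomputable section

/-- Covering dimension at most `n` (for a natural number `n`): every finite open cover
has an open refinement covering the space such that every point belongs to at most
`n + 1` members of the refinement. -/
def CovDimLENat (X : Type*) [TopologicalSpace X] (n : ℕ) : Prop :=
  ∀ 𝒰 : Set (Set X), 𝒰.Finite → (∀ U ∈ 𝒰, IsOpen U) → ⋃₀ 𝒰 = Set.univ →
    ∃ 𝒱 : Set (Set X), (∀ V ∈ 𝒱, IsOpen V) ∧ ⋃₀ 𝒱 = Set.univ ∧
      (∀ V ∈ 𝒱, ∃ U ∈ 𝒰, V ⊆ U) ∧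
      ∀ x : X, {V ∈ 𝒱 | x ∈ V}.Finite ∧ {V ∈ 𝒱 | x ∈ V}.ncard ≤ n + 1

/-- Covering dimension at most `n` for an integer `n`; negative bounds mean the space
is empty (`dim ∅ = -1`). -/
def CovDimLE (X : Type*) [TopologicalSpace X] (n : ℤ) : Prop :=
  IsEmpty X ∨ ∃ k : ℕ, (k : ℤ) ≤ n ∧ CovDimLENat X k

/-- A space is finite-dimensional if its covering dimension is at most `n` for some `n`. -/
def FiniteDimSpace (X : Type*) [TopologicalSpace X] : Prop :=
  ∃ n : ℕ, CovDimLENat X n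

/-- A perfect map: continuous, closed, with compact fibers. -/
def IsPerfectMap {X Y : Type*} [TopologicalSpace X] [TopologicalSpace Y] (f : X → Y) : Prop :=
  Continuous f ∧ IsClosedMap f ∧ ∀ y : Y, IsCompact (f ⁻¹' {y})

/-- A σ-perfect map: `X` is a countable union of closed sets `A i` whose images are
closed and on which `f` restricts to a perfect map onto its image. -/
def IsSigmaPerfectMap {X Y : Type*} [TopologicalSpace X] [TopologicalSpace Y] (f : X → Y) :
    Prop :=
  Continuous f ∧ ∃ A : ℕ → Set X, (⋃ i, A i) = Set.univ ∧
    ∀ i, IsClosed (A i) ∧ IsClosed (f '' A i) ∧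
      IsPerfectMap (Set.MapsTo.restrict f (A i) (f '' A i) (Set.mapsTo_image f (A i)))

/-- `dim f ≤ k`: every fiber of `f` has covering dimension at most `k`. -/
def DimMapLE {X Y : Type*} [TopologicalSpace X] [TopologicalSpace Y] (f : X → Y) (k : ℤ) :
    Prop :=
  ∀ y : Y, CovDimLE (f ⁻¹' {y}) k

/-- `B_n(h)`: the set of points of the codomain having at least `n` preimages. -/
def BranchSet {X Z : Type*} (h : X → Z) (n : ℕ) : Set Z :=
  {z | ∃ S : Finset X, n ≤ S.card ∧ ∀ x ∈ S, h x = z}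

/-- The source limitation topology on the space of bounded continuous maps. -/
def sourceLimitation (X E : Type*) [TopologicalSpace X] [PseudoMetricSpace E] :
    TopologicalSpace (X →ᵇ E) where
  IsOpen U := ∀ g ∈ U, ∃ α : X → ℝ, Continuous α ∧ (∀ x, 0 < α x) ∧
    ∀ h : X →ᵇ E, (∀ x, dist (h x) (g x) ≤ α x) → h ∈ U
  isOpen_univ := fun g _ =>
    ⟨fun _ => 1, continuous_const, fun _ => one_pos, fun _ _ => trivial⟩
  isOpen_inter := by
    rintro U V hU hV g ⟨hgU, hgV⟩
    obtain ⟨α, hαc, hαp, hα⟩ := hU g hgU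
    obtain ⟨β, hβc, hβp, hβ⟩ := hV g hgV
    exact ⟨fun x => min (α x) (β x), hαc.min hβc, fun x => lt_min (hαp x) (hβp x),
      fun h hh => ⟨hα h fun x => (hh x).trans (min_le_left _ _),
        hβ h fun x => (hh x).trans (min_le_right _ _)⟩⟩
  isOpen_sUnion := by
    rintro S hS g ⟨U, hU, hgU⟩
    obtain ⟨α, hc, hp, h⟩ := hS U hU g hgU
    exact ⟨α, hc, hp, fun h' hh' => ⟨U, hU, h h' hh'⟩⟩

/-- A C-space. -/
def IsCSpace (Y : Type*) [TopologicalSpace Y] : Prop :=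
  ∀ 𝒰 : ℕ → Set (Set Y), (∀ n, (∀ U ∈ 𝒰 n, IsOpen U) ∧ ⋃₀ 𝒰 n = Set.univ) →
    ∃ 𝒱 : ℕ → Set (Set Y),
      (∀ n, (∀ V ∈ 𝒱 n, IsOpen V) ∧ (∀ V ∈ 𝒱 n, ∃ U ∈ 𝒰 n, V ⊆ U) ∧
        (𝒱 n).Pairwise (Disjoint · ·)) ∧
      ⋃₀ (⋃ n, 𝒱 n) = Set.univ

/-- `F` is a `Z_m`-set in `M`: `F` is closed and the maps from the `m`-cube avoiding `F`
are dense in `C(𝕀^m, M)` (uniform convergence topology). -/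
def IsZmSet (m : ℕ) {M : Type*} [TopologicalSpace M] (F : Set M) : Prop :=
  IsClosed F ∧ Dense {u : C((Fin m → unitInterval), M) | ∀ z, u z ∉ F}

/-- `F` is a `Z`-set in `M` if it is a `Z_m`-set for all `m`. -/
def IsZSet {M : Type*} [TopologicalSpace M] (F : Set M) : Prop :=
  ∀ m : ℕ, IsZmSet m F

end



-- padding embedding
lemma pad_embedding (a b : ℕ) (hab : a ≤ b) :
    ∃ e : EuclideanSpace ℝ (Fin a) → EuclideanSpace ℝ (Fin b), IsEmbedding e := by
  classical
  set pad : EuclideanSpace ℝ (Fin a) → EuclideanSpace ℝ (Fin b) :=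
    fun v => WithLp.toLp 2 (fun i : Fin b => if h : (i : ℕ) < a then v ⟨i, h⟩ else 0) with hpad
  set r : EuclideanSpace ℝ (Fin b) → EuclideanSpace ℝ (Fin a) :=
    fun w => WithLp.toLp 2 (fun j : Fin a => w (Fin.castLE hab j)) with hr
  have hpc : Continuous pad := by
    have : Continuous fun v : EuclideanSpace ℝ (Fin a) => (fun i : Fin b =>
        if h : (i : ℕ) < a then v ⟨i, h⟩ else 0 : Fin b → ℝ) := by
      refine continuous_pi fun i => ?_
      by_cases h : (i : ℕ) < a
      · simp only [dif_pos h]; exact (continuous_apply (⟨(i : ℕ), h⟩ : Fin a)).comp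
          (EuclideanSpace.equiv (Fin a) ℝ).continuous
      · simpa [h] using continuous_const
    exact (EuclideanSpace.equiv (Fin b) ℝ).symm.continuous.comp this
  have hrc : Continuous r := by
    have : Continuous fun w : EuclideanSpace ℝ (Fin b) => (fun j : Fin a =>
        w (Fin.castLE hab j) : Fin a → ℝ) :=
      continuous_pi fun j => (continuous_apply _).comp
        (EuclideanSpace.equiv (Fin b) ℝ).continuous
    exact (EuclideanSpace.equiv (Fin a) ℝ).symm.continuous.comp this
  have hli : Function.LeftInverse r pad := by
    intro v
    ext j
    simp [hr, hpad, j.isLt]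
  exact ⟨pad, hli.isEmbedding hrc hpc⟩

/-- (Bogatyi's example) Let `T` be a compactum with `dim T ≤ m`
(`m ≥ 2`) not embeddable into `ℝ^{2m}`, let `X = 𝕀^m ⊕ T` and let `f : X → 𝕀^m` be the
identity on `𝕀^m` and constant `x₀` on `T` (here `dim X = m` and `dim 𝕀^m = m`). Then no
continuous map `g : X → ℝ^{m+2}` satisfies
`dim B_n(f × g) ≤ n ⬝ dim X - (n - 1)(m + 2 + dim 𝕀^m)` for all `n ≥ 1`. -/
theorem statement17 {T : Type*} [TopologicalSpace T] [CompactSpace T]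
    [TopologicalSpace.MetrizableSpace T]
    (m : ℕ) (hm : 2 ≤ m) (hdimT : CovDimLENat T m)
    (hnoemb : ¬ ∃ e : T → EuclideanSpace ℝ (Fin (2 * m)), IsEmbedding e)
    (x₀ : Fin m → unitInterval) :
    ¬ ∃ g : ((Fin m → unitInterval) ⊕ T) → EuclideanSpace ℝ (Fin (m + 2)),
        Continuous g ∧ ∀ n : ℕ, 1 ≤ n →
          CovDimLE
            (BranchSet (fun x : (Fin m → unitInterval) ⊕ T =>
              (Sum.elim id (fun _ => x₀) x, g x)) n)
            ((n : ℤ) * m - ((n : ℤ) - 1) * ((m : ℤ) + 2 + m)) := by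
  rintro ⟨g, hg, hdim⟩
  classical
  set F : ((Fin m → unitInterval) ⊕ T) → (Fin m → unitInterval) × EuclideanSpace ℝ (Fin (m + 2)) :=
    fun x => (Sum.elim id (fun _ => x₀) x, g x) with hF
  have h2 := hdim 2 (by norm_num)
  have hempty : ∀ z, z ∉ BranchSet F 2 := by
    intro z hz
    rcases h2 with h | ⟨k, hk, -⟩
    · exact h.false ⟨z, hz⟩
    · have : ((2:ℕ):ℤ) * m - (((2:ℕ):ℤ) - 1) * ((m : ℤ) + 2 + m) = -2 := by push_cast; ring
      rw [this] at hk; omega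
  have hinj : Function.Injective F := by
    intro x y hxy
    by_contra hne
    refine hempty (F x) ⟨{x, y}, ?_, ?_⟩
    · rw [Finset.card_insert_of_notMem (by simpa using hne), Finset.card_singleton]
    · intro a ha
      rcases Finset.mem_insert.1 ha with rfl | ha
      · rfl
      · rw [Finset.mem_singleton.1 ha, hxy]
  have hTinj : Function.Injective fun t : T => g (Sum.inr t) := by
    intro s t hst
    have : F (Sum.inr s) = F (Sum.inr t) := by
      simp only [hF, Sum.elim_inr]
      exact Prod.ext rfl hst
    simpa using hinj this
  have hTemb : IsEmbedding fun t : T => g (Sum.inr t) :=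
    ((hg.comp continuous_inr).isClosedEmbedding hTinj).isEmbedding
  obtain ⟨e, he⟩ := pad_embedding (m + 2) (2 * m) (by omega)
  exact hnoemb ⟨e ∘ fun t => g (Sum.inr t), he.comp hTemb⟩
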